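/- For integers a', a'' and nonnegative integer t, the (q,π)-binomial coefficients satisfy the Vandermonde-type identity: [[a'+a''; t]] = ∑_{t'+t''=t} π^{t't'' + a't''} q^{a't'' - a''t'} [[a'; t']] [[a''; t'']]. -/

import Mathlib

/- The ring `Aq = ℚ(q)[π]/(π²-1) ≅ ℚ(q) × ℚ(q)` (via π ↦ (1, -1), an isomorphism
since 2 is invertible).  Division/inversion is componentwise (the total fraction ring). -/
noncomputable section

abbrev Aq : Type := RatFunc ℚ × RatFunc ℚ

/-- the element `q` -/
def qA : Aq := (RatFunc.X, RatFunc.X)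

/-- the element `π`, satisfying `π² = 1` -/
def pA : Aq := (1, -1)

/-- The `(q,π)`-binomial coefficient
`[[a;t]] = (∏_{s=0}^{t-1} ((πq)^{a-s} - q^{s-a})) / (∏_{s=1}^{t} ((πq)^s - q^{-s}))`. -/
def qbinom (a : ℤ) (t : ℕ) : Aq :=
  (∏ s ∈ Finset.range t, ((pA * qA) ^ (a - (s : ℤ)) - qA ^ ((s : ℤ) - a))) /
  (∏ s ∈ Finset.range t, ((pA * qA) ^ ((s : ℤ) + 1) - qA ^ (-((s : ℤ) + 1))))



namespace QPB
variable {K : Type*} [Field K]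

def ff (p q : K) (n : ℤ) : K := (p*q)^n - q^(-n)
def NN (p q : K) (a : ℤ) (t : ℕ) : K := ∏ s ∈ Finset.range t, ff p q (a - s)
def DD (p q : K) (t : ℕ) : K := ∏ s ∈ Finset.range t, ff p q ((s:ℤ)+1)
def BB (p q : K) (a : ℤ) (t : ℕ) : K := NN p q a t / DD p q t
def cc (p q : K) (a b : ℤ) (t i : ℕ) : K :=
  p ^ ((i:ℤ) * ((t:ℤ) - i) + a * ((t:ℤ) - i)) * q ^ (a * ((t:ℤ) - i) - b * i)
def SS (p q : K) (a b : ℤ) (t : ℕ) : K :=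
  ∑ i ∈ Finset.range (t+1), cc p q a b t i * BB p q a i * BB p q b (t - i)

variable {p q : K}

lemma hp0 (hp : p^2 = 1) : p ≠ 0 := by
  intro h; rw [h] at hp; simp at hp

lemma hpq (hp : p^2 = 1) (hq : q ≠ 0) : p*q ≠ 0 := mul_ne_zero (hp0 hp) hq

lemma ff_add (hp : p^2 = 1) (hq : q ≠ 0) (m n : ℤ) :
    ff p q (m+n) = (p*q)^n * ff p q m + q^(-m) * ff p q n := by
  simp only [ff]
  rw [zpow_add₀ (hpq hp hq), neg_add, zpow_add₀ hq]
  ring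

lemma DD_ne (hf : ∀ s : ℕ, ff p q ((s:ℤ)+1) ≠ 0) (t : ℕ) : DD p q t ≠ 0 := by
  rw [DD]
  exact Finset.prod_ne_zero_iff.mpr fun s _ => hf s

lemma BB_zero (a : ℤ) : BB p q a 0 = 1 := by simp [BB, NN, DD]

lemma NN_succ (a : ℤ) (t : ℕ) : NN p q a (t+1) = NN p q (a-1) t * ff p q a := by
  rw [NN, Finset.prod_range_succ', NN]
  congr 1
  · exact Finset.prod_congr rfl fun i _ => by congr 1; push_cast; ring
  · congr 1; simp

lemma NN_succ' (a : ℤ) (t : ℕ) : NN p q a (t+1) = NN p q a t * ff p q (a - t) := by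
  rw [NN, Finset.prod_range_succ, NN]

lemma DD_succ (t : ℕ) : DD p q (t+1) = DD p q t * ff p q ((t:ℤ)+1) := by
  rw [DD, Finset.prod_range_succ, DD]

lemma pascal (hp : p^2 = 1) (hq : q ≠ 0) (hf : ∀ s : ℕ, ff p q ((s:ℤ)+1) ≠ 0)
    (a : ℤ) (t : ℕ) :
    BB p q a (t+1) = (p*q)^((t:ℤ)+1) * BB p q (a-1) (t+1)
      + q^(((t:ℤ)+1) - a) * BB p q (a-1) t := by
  have hD : DD p q t ≠ 0 := DD_ne hf t
  have hF : ff p q ((t:ℤ)+1) ≠ 0 := hf t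
  have e1 : NN p q a (t+1) = NN p q (a-1) t * ff p q a := NN_succ a t
  have e2 : NN p q (a-1) (t+1) = NN p q (a-1) t * ff p q (a - ((t:ℤ)+1)) := by
    rw [NN_succ']; congr 2; ring
  have h1 : ff p q a = (p*q)^((t:ℤ)+1) * ff p q (a - ((t:ℤ)+1))
      + q^(((t:ℤ)+1) - a) * ff p q ((t:ℤ)+1) := by
    have h := ff_add hp hq (a - ((t:ℤ)+1)) ((t:ℤ)+1)
    rw [sub_add_cancel, neg_sub] at h
    exact h
  rw [BB, BB, BB, e1, e2, DD_succ, h1]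
  field_simp

lemma p_even (hp : p^2 = 1) (k : ℤ) : p ^ (2*k) = 1 := by
  have h2 : ((2:ℤ)) = ((2:ℕ):ℤ) := rfl
  rw [zpow_mul, h2, zpow_natCast, hp, one_zpow]

lemma famA (hp : p^2 = 1) (hq : q ≠ 0) (e f e' f' S T : ℤ) (X Y : K)
    (h1 : e + S = e' + T) (h2 : f + S = f' + T) :
    p^e * q^f * ((p*q)^S * X) * Y = (p*q)^T * (p^e' * q^f' * X * Y) := by
  have hp' : p ≠ 0 := fun h => by simp [h] at hp
  rw [mul_zpow, mul_zpow]
  have L : p^e * q^f * (p^S * q^S * X) * Y = (p^e * p^S) * (q^f * q^S) * (X*Y) := by ring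
  have R : p^T * q^T * (p^e' * q^f' * X * Y) = (p^e' * p^T) * (q^f' * q^T) * (X*Y) := by ring
  rw [L, R, ← zpow_add₀ hp', ← zpow_add₀ hq, ← zpow_add₀ hp', ← zpow_add₀ hq, h1, h2]

lemma famB (hp : p^2 = 1) (hq : q ≠ 0) (e f e' f' S T k : ℤ) (X Y : K)
    (h1 : e = e' + 2*k) (h2 : f + S = f' + T) :
    p^e * q^f * (q^S * X) * Y = q^T * (p^e' * q^f' * X * Y) := by
  have hp' : p ≠ 0 := fun h => by simp [h] at hp
  rw [h1, zpow_add₀ hp', p_even hp, mul_one]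
  have L : p^e' * q^f * (q^S * X) * Y = p^e' * (q^f * q^S) * (X*Y) := by ring
  have R : q^T * (p^e' * q^f' * X * Y) = p^e' * (q^f' * q^T) * (X*Y) := by ring
  rw [L, R, ← zpow_add₀ hq, ← zpow_add₀ hq, h2]

lemma famC (hp : p^2 = 1) (hq : q ≠ 0) (e f e' f' T : ℤ) (X Y : K)
    (h1 : e = e' + T) (h2 : f = f' + T) :
    p^e * q^f * X * Y = (p*q)^T * (p^e' * q^f' * X * Y) := by
  have hp' : p ≠ 0 := fun h => by simp [h] at hp
  rw [mul_zpow, h1, h2, zpow_add₀ hp', zpow_add₀ hq]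
  ring


lemma SS_step (hp : p^2 = 1) (hq : q ≠ 0) (hf : ∀ s : ℕ, ff p q ((s:ℤ)+1) ≠ 0)
    (a b : ℤ) (t : ℕ) :
    SS p q (a+1) b (t+1) = (p*q)^((t:ℤ)+1) * SS p q a b (t+1)
      + q^((t:ℤ) - a - b) * SS p q a b t := by
  have key : ∀ i ∈ Finset.range (t+1),
      cc p q (a+1) b (t+1) (i+1) * BB p q (a+1) (i+1) * BB p q b (t+1 - (i+1))
        = (p*q)^((t:ℤ)+1) * (cc p q a b (t+1) (i+1) * BB p q a (i+1) * BB p q b (t+1-(i+1)))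
          + q^((t:ℤ)-a-b) * (cc p q a b t i * BB p q a i * BB p q b (t-i)) := by
    intro i _
    have hts : t + 1 - (i+1) = t - i := by omega
    rw [hts, pascal hp hq hf (a+1) i, add_sub_cancel_right, mul_add, add_mul]
    congr 1
    · simp only [cc]
      push_cast
      exact famA hp hq _ _ _ _ _ _ _ _ (by ring) (by ring)
    · simp only [cc]
      push_cast
      rw [show ((i:ℤ)+1) - (a+1) = (i:ℤ) - a from by ring]
      exact famB hp hq _ _ _ _ _ _ ((t:ℤ)-i) _ _ (by ring) (by ring)
  have g0 : cc p q (a+1) b (t+1) 0 * BB p q (a+1) 0 * BB p q b (t+1-0)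
      = (p*q)^((t:ℤ)+1) * (cc p q a b (t+1) 0 * BB p q a 0 * BB p q b (t+1-0)) := by
    rw [BB_zero, BB_zero]
    simp only [cc]
    push_cast
    exact famC hp hq _ _ _ _ _ _ _ (by ring) (by ring)
  calc SS p q (a+1) b (t+1)
      = (∑ i ∈ Finset.range (t+1),
          cc p q (a+1) b (t+1) (i+1) * BB p q (a+1) (i+1) * BB p q b (t+1-(i+1)))
        + cc p q (a+1) b (t+1) 0 * BB p q (a+1) 0 * BB p q b (t+1-0) := by
        rw [SS, Finset.sum_range_succ']
    _ = (∑ i ∈ Finset.range (t+1),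
          ((p*q)^((t:ℤ)+1) * (cc p q a b (t+1) (i+1) * BB p q a (i+1) * BB p q b (t+1-(i+1)))
           + q^((t:ℤ)-a-b) * (cc p q a b t i * BB p q a i * BB p q b (t-i))))
        + (p*q)^((t:ℤ)+1) * (cc p q a b (t+1) 0 * BB p q a 0 * BB p q b (t+1-0)) := by
        rw [Finset.sum_congr rfl key, g0]
    _ = (p*q)^((t:ℤ)+1) * ((∑ i ∈ Finset.range (t+1),
            cc p q a b (t+1) (i+1) * BB p q a (i+1) * BB p q b (t+1-(i+1)))
          + cc p q a b (t+1) 0 * BB p q a 0 * BB p q b (t+1-0))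
        + q^((t:ℤ)-a-b) * ∑ i ∈ Finset.range (t+1),
            cc p q a b t i * BB p q a i * BB p q b (t-i) := by
        rw [Finset.sum_add_distrib, ← Finset.mul_sum, ← Finset.mul_sum]
        ring
    _ = (p*q)^((t:ℤ)+1) * SS p q a b (t+1) + q^((t:ℤ) - a - b) * SS p q a b t := by
        rw [SS, SS, Finset.sum_range_succ'
          (fun i => cc p q a b (t+1) i * BB p q a i * BB p q b (t+1-i)) (t+1)]


lemma BB_int_zero (t : ℕ) (ht : t ≠ 0) : BB p q 0 t = 0 := by
  rw [BB, NN, Finset.prod_eq_zero (Finset.mem_range.mpr (Nat.pos_of_ne_zero ht))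
    (by simp [ff]), zero_div]

lemma SS_zero_right (a b : ℤ) : SS p q a b 0 = 1 := by
  simp [SS, cc, BB_zero]

theorem BB_vandermonde (hp : p^2 = 1) (hq : q ≠ 0)
    (hf : ∀ s : ℕ, ff p q ((s:ℤ)+1) ≠ 0) (a b : ℤ) : ∀ t : ℕ,
    BB p q (a+b) t = SS p q a b t := by
  induction a using Int.induction_on with
  | zero =>
    intro t
    rw [zero_add, SS, Finset.sum_eq_single_of_mem 0 (Finset.mem_range.mpr t.succ_pos)
      (fun x _ hx => by rw [BB_int_zero x hx]; ring)]
    simp [cc, BB_zero]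
  | succ i ih =>
    intro t
    cases t with
    | zero => rw [BB_zero, SS_zero_right]
    | succ t =>
      rw [pascal hp hq hf ((i:ℤ)+1+b) t,
        show ((i:ℤ)+1+b) - 1 = (i:ℤ)+b from by ring,
        show ((t:ℤ)+1) - ((i:ℤ)+1+b) = (t:ℤ) - i - b from by ring,
        ih (t+1), ih t]
      exact (SS_step hp hq hf i b t).symm
  | pred i ih =>
    intro t
    induction t with
    | zero => rw [BB_zero, SS_zero_right]
    | succ t iht =>
      have hP := pascal hp hq hf (-(i:ℤ)+b) t
      rw [show (-(i:ℤ)+b) - 1 = (-(i:ℤ)-1)+b from by ring, ih (t+1), iht] at hP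
      have hS := SS_step hp hq hf (-(i:ℤ)-1) b t
      rw [show (-(i:ℤ)-1) + 1 = -(i:ℤ) from by ring,
        show (t:ℤ) - (-(i:ℤ)-1) - b = (t:ℤ)+1 - (-(i:ℤ)+b) from by ring] at hS
      apply mul_left_cancel₀ (zpow_ne_zero ((t:ℤ)+1) (hpq hp hq))
      exact (add_right_cancel (hS.symm.trans hP)).symm

theorem BB_vandermonde' (hp : p^2 = 1) (hq : q ≠ 0)
    (hf : ∀ s : ℕ, ff p q ((s:ℤ)+1) ≠ 0) (a b : ℤ) (t : ℕ) :
    BB p q (a+b) t = ∑ x ∈ Finset.HasAntidiagonal.antidiagonal t,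
      p ^ ((x.1 : ℤ) * (x.2 : ℤ) + a * (x.2 : ℤ)) *
        q ^ (a * (x.2 : ℤ) - b * (x.1 : ℤ)) * BB p q a x.1 * BB p q b x.2 := by
  rw [BB_vandermonde hp hq hf a b t, Finset.Nat.sum_antidiagonal_eq_sum_range_succ_mk, SS]
  refine Finset.sum_congr rfl fun i hi => ?_
  have hle : i ≤ t := by have := Finset.mem_range.mp hi; omega
  simp only [cc]
  rw [Nat.cast_sub hle]

lemma Xpow_ne_one (m : ℕ) (hm : m ≠ 0) : (RatFunc.X : RatFunc ℚ)^m ≠ 1 := by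
  intro h
  rw [← RatFunc.algebraMap_X, ← map_pow, ← map_one (algebraMap (Polynomial ℚ) (RatFunc ℚ))] at h
  have h2 := RatFunc.algebraMap_injective ℚ h
  have := congrArg Polynomial.natDegree h2
  simp [Polynomial.natDegree_X_pow] at this
  exact hm this

lemma hf_general (p : RatFunc ℚ) (hp : p^2 = 1) :
    ∀ s : ℕ, ff p RatFunc.X ((s:ℤ)+1) ≠ 0 := by
  intro s h
  have hx : (RatFunc.X : RatFunc ℚ) ≠ 0 := RatFunc.X_ne_zero
  have hp' : p ≠ 0 := hp0 hp
  rw [ff, sub_eq_zero] at h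
  have h2 := congrArg (fun y => y*y) h
  rw [← zpow_add₀ (mul_ne_zero hp' hx), ← zpow_add₀ hx, mul_zpow,
    show ((s:ℤ)+1) + ((s:ℤ)+1) = 2*((s:ℤ)+1) from by ring, p_even hp, one_mul,
    show -((s:ℤ)+1) + -((s:ℤ)+1) = -(2*((s:ℤ)+1)) from by ring] at h2
  have h3 := congrArg (fun y => y * RatFunc.X^(2*((s:ℤ)+1))) h2
  rw [← zpow_add₀ hx, ← zpow_add₀ hx, neg_add_cancel, zpow_zero,
    show 2*((s:ℤ)+1) + 2*((s:ℤ)+1) = ((4*(s+1) : ℕ) : ℤ) from by push_cast; ring,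
    zpow_natCast] at h3
  exact Xpow_ne_one (4*(s+1)) (by omega) h3

end QPB

-- Bridge lemmas between `Aq` and the componentwise theory above.
open QPB in
lemma fst_prod {ι : Type*} (s : Finset ι) (f : ι → Aq) :
    (∏ i ∈ s, f i).1 = ∏ i ∈ s, (f i).1 := map_prod (RingHom.fst _ _) f s

lemma snd_prod {ι : Type*} (s : Finset ι) (f : ι → Aq) :
    (∏ i ∈ s, f i).2 = ∏ i ∈ s, (f i).2 := map_prod (RingHom.snd _ _) f s

lemma fst_sum {ι : Type*} (s : Finset ι) (f : ι → Aq) :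
    (∑ i ∈ s, f i).1 = ∑ i ∈ s, (f i).1 := map_sum (RingHom.fst _ _) f s

lemma snd_sum {ι : Type*} (s : Finset ι) (f : ι → Aq) :
    (∑ i ∈ s, f i).2 = ∑ i ∈ s, (f i).2 := map_sum (RingHom.snd _ _) f s

lemma fst_div (x y : Aq) : (x / y).1 = x.1 / y.1 := rfl
lemma snd_div (x y : Aq) : (x / y).2 = x.2 / y.2 := rfl

lemma qbinom_fst (a : ℤ) (t : ℕ) : (qbinom a t).1 = QPB.BB 1 RatFunc.X a t := by
  rw [qbinom, QPB.BB, QPB.NN, QPB.DD, fst_div]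
  congr 1
  · rw [fst_prod]
    refine Finset.prod_congr rfl fun s _ => ?_
    show (pA*qA).1 ^ (a - s) - qA.1 ^ ((s:ℤ) - a) = QPB.ff 1 RatFunc.X (a - s)
    rw [QPB.ff, neg_sub]
    rfl
  · rw [fst_prod]
    exact Finset.prod_congr rfl fun s _ => rfl

lemma qbinom_snd (a : ℤ) (t : ℕ) : (qbinom a t).2 = QPB.BB (-1) RatFunc.X a t := by
  rw [qbinom, QPB.BB, QPB.NN, QPB.DD, snd_div]
  congr 1
  · rw [snd_prod]
    refine Finset.prod_congr rfl fun s _ => ?_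
    show (pA*qA).2 ^ (a - s) - qA.2 ^ ((s:ℤ) - a) = QPB.ff (-1) RatFunc.X (a - s)
    rw [QPB.ff, neg_sub]
    rfl
  · rw [snd_prod]
    exact Finset.prod_congr rfl fun s _ => rfl

/-- Vandermonde-type identity:
`[[a'+a'';t]] = ∑_{t'+t''=t} π^{t't''+a't''} q^{a't''-a''t'} [[a';t']][[a'';t'']]`. -/
theorem qbinom_vandermonde (a' a'' : ℤ) (t : ℕ) :
    qbinom (a' + a'') t =
      ∑ x ∈ Finset.HasAntidiagonal.antidiagonal t,
        pA ^ ((x.1 : ℤ) * (x.2 : ℤ) + a' * (x.2 : ℤ)) *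
          qA ^ (a' * (x.2 : ℤ) - a'' * (x.1 : ℤ)) *
            qbinom a' x.1 * qbinom a'' x.2 := by
  have h1 : ((1 : RatFunc ℚ))^2 = 1 := one_pow 2
  have h2 : ((-1 : RatFunc ℚ))^2 = 1 := by norm_num
  have hx : (RatFunc.X : RatFunc ℚ) ≠ 0 := RatFunc.X_ne_zero
  have hmul1 : ∀ x y : Aq, (x*y).1 = x.1*y.1 := fun _ _ => rfl
  have hmul2 : ∀ x y : Aq, (x*y).2 = x.2*y.2 := fun _ _ => rfl
  have hzpow1 : ∀ (x : Aq) (n : ℤ), (x^n).1 = x.1^n := fun _ _ => rfl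
  have hzpow2 : ∀ (x : Aq) (n : ℤ), (x^n).2 = x.2^n := fun _ _ => rfl
  have hpA1 : pA.1 = 1 := rfl
  have hpA2 : pA.2 = -1 := rfl
  have hqA1 : qA.1 = RatFunc.X := rfl
  have hqA2 : qA.2 = RatFunc.X := rfl
  refine Prod.ext ?_ ?_
  · rw [qbinom_fst, QPB.BB_vandermonde' h1 hx (QPB.hf_general 1 h1) a' a'' t, fst_sum]
    refine Finset.sum_congr rfl fun x _ => ?_
    simp only [hmul1, hzpow1, hpA1, hqA1, qbinom_fst]
  · rw [qbinom_snd, QPB.BB_vandermonde' h2 hx (QPB.hf_general (-1) h2) a' a'' t, snd_sum]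
    refine Finset.sum_congr rfl fun x _ => ?_
    simp only [hmul2, hzpow2, hpA2, hqA2, qbinom_snd]
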